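/- The clique number of the configuration graph G(P) equals 1 + max_{i∈Σ} P[i]. -/

import Mathlib

/-- The Parikh vector of a word `w : Fin n → Fin σ`. -/
def parikh {n σ : ℕ} (w : Fin n → Fin σ) : Fin σ → ℕ :=
  fun a => (Finset.univ.filter fun i => w i = a).card

/-- Words of length `n` over alphabet `Fin σ` with Parikh vector `P`. -/
abbrev Words (n σ : ℕ) (P : Fin σ → ℕ) := {w : Fin n → Fin σ // parikh w = P}

/-- `u` is obtained from `w` by a single 2-swap. -/
def isSwap {n σ : ℕ} (w u : Fin n → Fin σ) : Prop :=
  ∃ i j : Fin n, i ≠ j ∧ w i ≠ w j ∧ u = w ∘ Equiv.swap i j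

/-- The configuration graph `G(P)`. -/
def configGraph (n σ : ℕ) (P : Fin σ → ℕ) : SimpleGraph (Words n σ P) :=
  SimpleGraph.fromRel fun w u => isSwap w.1 u.1

open Finset

section Aux

variable {n σ : ℕ}

lemma isSwap_symm {w u : Fin n → Fin σ} (h : isSwap w u) : isSwap u w := by
  obtain ⟨i, j, hij, hw, rfl⟩ := h
  refine ⟨i, j, hij, ?_, ?_⟩
  · simpa using hw.symm
  · funext x; simp [Function.comp, Equiv.swap_apply_self]

lemma adj_iff {P : Fin σ → ℕ} {w u : Words n σ P} :
    (configGraph n σ P).Adj w u ↔ w ≠ u ∧ isSwap w.1 u.1 := by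
  rw [configGraph, SimpleGraph.fromRel_adj]
  constructor
  · rintro ⟨h, h2 | h2⟩
    · exact ⟨h, h2⟩
    · exact ⟨h, isSwap_symm h2⟩
  · rintro ⟨h, h2⟩; exact ⟨h, Or.inl h2⟩

lemma parikh_comp (w : Fin n → Fin σ) (e : Equiv.Perm (Fin n)) :
    parikh (w ∘ e) = parikh w := by
  funext a
  unfold parikh
  rw [show (Finset.univ.filter fun i => (w ∘ e) i = a)
      = (Finset.univ.filter fun i => w i = a).map e.symm.toEmbedding from ?_]
  · rw [Finset.card_map]
  · ext x
    rw [Finset.mem_map_equiv]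
    simp

lemma swap_eq_cases {i j p q : Fin n} (hij : i ≠ j) (hpq : p ≠ q)
    (h : Equiv.swap i j = Equiv.swap p q) :
    (i = p ∧ j = q) ∨ (i = q ∧ j = p) := by
  have hj := Equiv.ext_iff.mp h j
  rw [Equiv.swap_apply_right] at hj
  -- hj : i = swap p q j
  by_cases hjq : j = q
  · subst hjq
    rw [Equiv.swap_apply_right] at hj
    exact Or.inl ⟨hj, rfl⟩
  · by_cases hjp : j = p
    · subst hjp
      rw [Equiv.swap_apply_left] at hj
      exact Or.inr ⟨hj, rfl⟩
    · rw [Equiv.swap_apply_of_ne_of_ne hjp hjq] at hj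
      exact absurd hj hij

lemma three_pigeon {α : Type*} {i j k a b : α} (hij : i ≠ j) (hik : i ≠ k) (hjk : j ≠ k)
    (hi : i = a ∨ i = b) (hj : j = a ∨ j = b) (hk : k = a ∨ k = b) : False := by
  rcases hi with rfl | rfl <;> rcases hj with h | h <;> rcases hk with h' | h' <;> simp_all

lemma key0 {w : Fin n → Fin σ} {p q r : Fin n} (hpq : p ≠ q) (hpr : p ≠ r)
    (hwq : w p ≠ w q) (hwr : w p ≠ w r)
    (hne : w ∘ Equiv.swap p q ≠ w ∘ Equiv.swap p r)
    (hsw : isSwap (w ∘ Equiv.swap p q) (w ∘ Equiv.swap p r)) :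
    q ≠ r ∧ w q = w r := by
  have hqr : q ≠ r := by rintro rfl; exact hne rfl
  refine ⟨hqr, ?_⟩
  by_contra hwqr
  obtain ⟨a, b, hab, hNe, hv⟩ := hsw
  have mem : ∀ x : Fin n, (w ∘ Equiv.swap p q) x ≠ (w ∘ Equiv.swap p r) x → x = a ∨ x = b := by
    intro x hx
    by_contra hc
    push_neg at hc
    apply hx
    rw [hv]
    simp only [Function.comp_apply]
    rw [Equiv.swap_apply_of_ne_of_ne hc.1 hc.2]
  have hp : p = a ∨ p = b := by
    apply mem
    simpa using hwqr
  have hq : q = a ∨ q = b := by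
    apply mem
    simp only [Function.comp_apply, Equiv.swap_apply_right]
    rw [Equiv.swap_apply_of_ne_of_ne (Ne.symm hpq) hqr]
    exact hwq
  have hr : r = a ∨ r = b := by
    apply mem
    simp only [Function.comp_apply, Equiv.swap_apply_right]
    rw [Equiv.swap_apply_of_ne_of_ne (Ne.symm hpr) (Ne.symm hqr)]
    exact fun h => hwr h.symm
  exact three_pigeon hpq hpr hqr hp hq hr

lemma key {w : Fin n → Fin σ} {i j k l : Fin n}
    (hij : i ≠ j) (hkl : k ≠ l) (hwij : w i ≠ w j) (hwkl : w k ≠ w l)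
    (hne : w ∘ Equiv.swap i j ≠ w ∘ Equiv.swap k l)
    (hsw : isSwap (w ∘ Equiv.swap i j) (w ∘ Equiv.swap k l)) :
    ∃ p q r : Fin n, p ≠ q ∧ p ≠ r ∧ q ≠ r ∧ w p ≠ w q ∧ w q = w r ∧
      Equiv.swap i j = Equiv.swap p q ∧ Equiv.swap k l = Equiv.swap p r := by
  by_cases h1 : i = k
  · subst h1
    have := key0 hij hkl hwij hwkl hne hsw
    exact ⟨i, j, l, hij, hkl, this.1, hwij, this.2, rfl, rfl⟩
  by_cases h2 : i = l
  · subst h2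
    rw [Equiv.swap_comm k i] at hne hsw ⊢
    have := key0 hij h1 hwij (fun h => hwkl h.symm) hne hsw
    exact ⟨i, j, k, hij, h1, this.1, hwij, this.2, rfl, rfl⟩
  by_cases h3 : j = k
  · subst h3
    rw [Equiv.swap_comm i j] at hne hsw ⊢
    have := key0 (Ne.symm hij) hkl (fun h => hwij h.symm) hwkl hne hsw
    exact ⟨j, i, l, Ne.symm hij, hkl, this.1, fun h => hwij h.symm, this.2, rfl, rfl⟩
  by_cases h4 : j = l
  · subst h4
    rw [Equiv.swap_comm i j] at hne hsw ⊢
    rw [Equiv.swap_comm k j] at hne hsw ⊢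
    have hjk : j ≠ k := h3
    have := key0 (Ne.symm hij) hjk (fun h => hwij h.symm) (fun h => hwkl h.symm)
      hne hsw
    exact ⟨j, i, k, Ne.symm hij, hjk, this.1, fun h => hwij h.symm, this.2, rfl, rfl⟩
  -- disjoint case: contradiction
  exfalso
  obtain ⟨a, b, hab, hNe, hv⟩ := hsw
  have mem : ∀ x : Fin n,
      (w ∘ Equiv.swap i j) x ≠ (w ∘ Equiv.swap k l) x → x = a ∨ x = b := by
    intro x hx
    by_contra hc
    push_neg at hc
    apply hx
    rw [hv]
    simp only [Function.comp_apply]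
    rw [Equiv.swap_apply_of_ne_of_ne hc.1 hc.2]
  have hi : i = a ∨ i = b := by
    apply mem
    simp only [Function.comp_apply, Equiv.swap_apply_left]
    rw [Equiv.swap_apply_of_ne_of_ne h1 h2]
    exact fun h => hwij h.symm
  have hj : j = a ∨ j = b := by
    apply mem
    simp only [Function.comp_apply, Equiv.swap_apply_right]
    rw [Equiv.swap_apply_of_ne_of_ne h3 h4]
    exact hwij
  have hk2 : k = a ∨ k = b := by
    apply mem
    simp only [Function.comp_apply, Equiv.swap_apply_left]
    rw [Equiv.swap_apply_of_ne_of_ne (show k ≠ i from fun h => h1 h.symm) (show k ≠ j from fun h => h3 h.symm)]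
    exact hwkl
  exact three_pigeon hij h1 h3 hi hj hk2

end Aux


section Main

variable {n σ : ℕ} {P : Fin σ → ℕ}

lemma clique_card_le (hσ : 2 ≤ σ) (hP : ∀ i, 1 ≤ P i)
    (s : Finset (Words n σ P)) (hs : (configGraph n σ P).IsClique s) :
    s.card ≤ 1 + Finset.univ.sup P := by
  have hσ0 : 0 < σ := by omega
  have hM : 1 ≤ Finset.univ.sup P :=
    le_trans (hP ⟨0, hσ0⟩) (Finset.le_sup (mem_univ _))
  by_cases hcard : s.card ≤ 1
  · omega
  push_neg at hcard
  have h0 : 0 < s.card := by omega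
  obtain ⟨w, hw⟩ := Finset.card_pos.mp h0
  have hTle : (s.erase w).card ≤ Finset.univ.sup P := by
    set T := s.erase w with hT
    have hadjw : ∀ u ∈ T, ∃ i j, i ≠ j ∧ w.1 i ≠ w.1 j ∧ u.1 = w.1 ∘ Equiv.swap i j := by
      intro u hu
      have h1 : u ∈ s := mem_of_mem_erase hu
      have h2 : w ≠ u := fun h => (ne_of_mem_erase hu) h.symm
      exact (adj_iff.mp (hs (Finset.mem_coe.mpr hw) (Finset.mem_coe.mpr h1) h2)).2
    choose I J hIJ hwIJ hu using hadjw
    have hadjTT : ∀ u ∈ T, ∀ v ∈ T, u ≠ v → isSwap u.1 v.1 := by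
      intro u hu' v hv' huv
      exact (adj_iff.mp (hs (Finset.mem_coe.mpr (mem_of_mem_erase hu'))
        (Finset.mem_coe.mpr (mem_of_mem_erase hv')) huv)).2
    by_cases hT1 : T.card ≤ 1
    · exact le_trans hT1 hM
    push_neg at hT1
    obtain ⟨u1, hu1, u2, hu2, hu12⟩ := Finset.one_lt_card.mp hT1
    have hne12 : w.1 ∘ Equiv.swap (I u1 hu1) (J u1 hu1)
        ≠ w.1 ∘ Equiv.swap (I u2 hu2) (J u2 hu2) := by
      rw [← hu u1 hu1, ← hu u2 hu2]
      exact fun h => hu12 (Subtype.ext h)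
    have hsw12 : isSwap (w.1 ∘ Equiv.swap (I u1 hu1) (J u1 hu1))
        (w.1 ∘ Equiv.swap (I u2 hu2) (J u2 hu2)) := by
      rw [← hu u1 hu1, ← hu u2 hu2]
      exact hadjTT u1 hu1 u2 hu2 hu12
    obtain ⟨p, q, r, hpq, hpr, hqr, hwpq, hwqr, he1, he2⟩ :=
      key (hIJ u1 hu1) (hIJ u2 hu2) (hwIJ u1 hu1) (hwIJ u2 hu2) hne12 hsw12
    have hu1' : u1.1 = w.1 ∘ Equiv.swap p q := by rw [hu u1 hu1, he1]
    have hu2' : u2.1 = w.1 ∘ Equiv.swap p r := by rw [hu u2 hu2, he2]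
    have claim : ∀ u (huT : u ∈ T),
        ∃ q', q' ≠ p ∧ w.1 q' = w.1 q ∧ u.1 = w.1 ∘ Equiv.swap p q' := by
      intro u huT
      by_cases e1 : u = u1
      · subst e1; exact ⟨q, Ne.symm hpq, rfl, hu1'⟩
      by_cases e2 : u = u2
      · subst e2; exact ⟨r, Ne.symm hpr, hwqr.symm, hu2'⟩
      have hXne1 : w.1 ∘ Equiv.swap (I u huT) (J u huT) ≠ w.1 ∘ Equiv.swap p q := by
        rw [← hu u huT, ← hu1']
        exact fun h => e1 (Subtype.ext h)
      have hXsw1 : isSwap (w.1 ∘ Equiv.swap (I u huT) (J u huT)) (w.1 ∘ Equiv.swap p q) := by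
        rw [← hu u huT, ← hu1']
        exact hadjTT u huT u1 hu1 e1
      obtain ⟨p1, q1, r1, hp1q1, hp1r1, hq1r1, hwp1q1, hwq1r1, f1, f2⟩ :=
        key (hIJ u huT) hpq (hwIJ u huT) hwpq hXne1 hXsw1
      rcases swap_eq_cases hpq hp1r1 f2 with ⟨hA1, hA2⟩ | ⟨hB1, hB2⟩
      · -- p = p1, q = r1
        refine ⟨q1, ?_, ?_, ?_⟩
        · rw [hA1]; exact Ne.symm hp1q1
        · rw [hwq1r1, ← hA2]
        · rw [hu u huT, f1, ← hA1]
      · -- p = r1, q = p1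
        exfalso
        have hqq1 : q ≠ q1 := by rw [hB2]; exact hp1q1
        have hwq1p : w.1 q1 = w.1 p := by rw [hwq1r1, ← hB1]
        have hwqq1 : w.1 q ≠ w.1 q1 := by
          rw [hwq1p]; exact fun h => hwpq h.symm
        have huX : u.1 = w.1 ∘ Equiv.swap q q1 := by
          rw [hu u huT, f1, ← hB2]
        have hXne2 : w.1 ∘ Equiv.swap q q1 ≠ w.1 ∘ Equiv.swap p r := by
          rw [← huX, ← hu2']
          exact fun h => e2 (Subtype.ext h)
        have hXsw2 : isSwap (w.1 ∘ Equiv.swap q q1) (w.1 ∘ Equiv.swap p r) := by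
          rw [← huX, ← hu2']
          exact hadjTT u huT u2 hu2 e2
        have hwpr : w.1 p ≠ w.1 r := by rw [← hwqr]; exact hwpq
        obtain ⟨p2, q2, r2, hp2q2, hp2r2, hq2r2, hwp2q2, hwq2r2, g1, g2⟩ :=
          key hqq1 hpr hwqq1 hwpr hXne2 hXsw2
        rcases swap_eq_cases hpr hp2r2 g2 with ⟨hC1, hC2⟩ | ⟨hC1, hC2⟩
        · -- p = p2, r = r2
          rcases swap_eq_cases hqq1 hp2q2 g1 with ⟨hD1, hD2⟩ | ⟨hD1, hD2⟩
          · -- q = p2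
            exact hpq (by rw [hC1, ← hD1])
          · -- q = q2, q1 = p2
            apply e1
            apply Subtype.ext
            rw [huX, hu1', hD2, ← hC1, Equiv.swap_comm]
          -- u = w ∘ swap q p = w ∘ swap p q = u1
        · -- p = r2, r = p2
          rcases swap_eq_cases hqq1 hp2q2 g1 with ⟨hD1, hD2⟩ | ⟨hD1, hD2⟩
          · -- q = p2 = r
            exact hqr (by rw [hD1, ← hC2])
          · -- q = q2 : w q = w q2 = w r2 = w p
            apply hwpq
            have : w.1 q = w.1 p := by rw [hD1, hwq2r2, ← hC1]
            exact this.symm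
    choose g hg1 hg2 hg3 using claim
    have hinj : T.card ≤ (Finset.univ.filter fun x => w.1 x = w.1 q).card := by
      apply Finset.card_le_card_of_injOn (fun u => if h : u ∈ T then g u h else p)
      · intro u huT
        rw [Finset.mem_coe] at huT
        simp only [Finset.mem_coe, dif_pos huT]
        simp only [Finset.mem_filter, Finset.mem_univ, true_and]
        exact hg2 u huT
      · intro u huT v hvT heq
        rw [Finset.mem_coe] at huT hvT
        simp only [dif_pos huT, dif_pos hvT] at heq
        apply Subtype.ext
        rw [hg3 u huT, hg3 v hvT, heq]
    have hcount : (Finset.univ.filter fun x => w.1 x = w.1 q).card = P (w.1 q) :=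
      congrFun w.2 (w.1 q)
    calc T.card ≤ _ := hinj
      _ = P (w.1 q) := hcount
      _ ≤ Finset.univ.sup P := Finset.le_sup (mem_univ _)
  have hTc : (s.erase w).card = s.card - 1 := Finset.card_erase_of_mem hw
  omega

def fiberEquiv (P : Fin σ → ℕ) (a : Fin σ) :
    {x : Σ b : Fin σ, Fin (P b) // x.1 = a} ≃ Fin (P a) where
  toFun x := Fin.cast (congrArg P x.2) x.1.2
  invFun y := ⟨⟨a, y⟩, rfl⟩
  left_inv := by rintro ⟨⟨b, y⟩, rfl⟩; rfl
  right_inv y := rfl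

lemma parikh_proj (P : Fin σ → ℕ) (e : (Σ a : Fin σ, Fin (P a)) ≃ Fin n) :
    parikh (fun i => (e.symm i).1) = P := by
  funext a
  unfold parikh
  rw [← Fintype.card_subtype]
  exact (Fintype.card_congr ((Equiv.subtypeEquiv e.symm fun i => Iff.rfl).trans
    (fiberEquiv P a))).trans (Fintype.card_fin _)

/-- helper word -/
def gword (P : Fin σ → ℕ) (w0 : Fin n → Fin σ) (hw0 : parikh w0 = P) (i j : Fin n) :
    Words n σ P :=
  ⟨w0 ∘ Equiv.swap i j, by rw [parikh_comp]; exact hw0⟩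

lemma exists_big_clique (hσ : 2 ≤ σ) (hP : ∀ i, 1 ≤ P i) (hn : ∑ i, P i = n) :
    ∃ S : Finset (Words n σ P),
      (configGraph n σ P).IsNClique (1 + Finset.univ.sup P) S := by
  have hσ0 : 0 < σ := by omega
  have e : (Σ a : Fin σ, Fin (P a)) ≃ Fin n :=
    Fintype.equivOfCardEq (by simp [hn])
  obtain ⟨w0, hw0⟩ : ∃ w0 : Fin n → Fin σ, parikh w0 = P :=
    ⟨fun i => (e.symm i).1, parikh_proj P e⟩
  obtain ⟨a0, -, ha0⟩ :=
    Finset.exists_mem_eq_sup (Finset.univ : Finset (Fin σ)) ⟨⟨0, hσ0⟩, mem_univ _⟩ P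
  obtain ⟨b0, hb0⟩ := Fintype.exists_ne_of_one_lt_card (by simp only [Fintype.card_fin]; omega) a0
  have hb0c : (Finset.univ.filter fun x => w0 x = b0).card = P b0 := by rw [← hw0]; rfl
  obtain ⟨j0, hj0mem⟩ := Finset.card_pos.mp
    (show 0 < (Finset.univ.filter fun x => w0 x = b0).card by rw [hb0c]; exact hP b0)
  have hj0 : w0 j0 = b0 := (Finset.mem_filter.mp hj0mem).2
  set A := Finset.univ.filter fun x => w0 x = a0 with hA
  have hAcard : A.card = P a0 := by rw [← hw0]; rfl
  have hAmem : ∀ i ∈ A, w0 i = a0 := fun i hi => (Finset.mem_filter.mp hi).2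
  have hAj0 : ∀ i ∈ A, i ≠ j0 := by
    intro i hi h
    exact hb0 (by rw [← hj0, ← h, hAmem i hi])
  have hgval : ∀ i, (gword P w0 hw0 i j0).1 = w0 ∘ Equiv.swap i j0 := fun _ => rfl
  have hgi : ∀ i ∈ A, (gword P w0 hw0 i j0).1 i = b0 := by
    intro i hi
    rw [hgval]
    simp only [Function.comp_apply, Equiv.swap_apply_left]
    exact hj0
  have hgne : ∀ i ∈ A, ∀ i' ∈ A, i ≠ i' → (gword P w0 hw0 i j0).1 i' = a0 := by
    intro i hi i' hi' hne
    rw [hgval]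
    simp only [Function.comp_apply]
    rw [Equiv.swap_apply_of_ne_of_ne (Ne.symm hne) (hAj0 i' hi')]
    exact hAmem i' hi'
  have hinjA : ∀ i ∈ A, ∀ i' ∈ A, gword P w0 hw0 i j0 = gword P w0 hw0 i' j0 → i = i' := by
    intro i hi i' hi' h
    by_contra hne
    have h1 : (gword P w0 hw0 i j0).1 i = (gword P w0 hw0 i' j0).1 i := by rw [h]
    rw [hgi i hi, hgne i' hi' i hi (fun hh => hne hh.symm)] at h1
    exact hb0 h1
  have hW0notmem : (⟨w0, hw0⟩ : Words n σ P) ∉ A.image fun i => gword P w0 hw0 i j0 := by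
    intro hmem
    obtain ⟨i, hi, hgi'⟩ := Finset.mem_image.mp hmem
    have h1 : (gword P w0 hw0 i j0).1 i = w0 i := by rw [hgi']
    rw [hgi i hi, hAmem i hi] at h1
    exact hb0 h1
  refine ⟨insert ⟨w0, hw0⟩ (A.image fun i => gword P w0 hw0 i j0), ?_, ?_⟩
  · -- IsClique
    intro x hx y hy hxy
    simp only [Finset.coe_insert, Set.mem_insert_iff, Finset.coe_image, Set.mem_image,
      Finset.mem_coe] at hx hy
    have adjW0g : ∀ i ∈ A, (configGraph n σ P).Adj ⟨w0, hw0⟩ (gword P w0 hw0 i j0) := by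
      intro i hi
      apply adj_iff.mpr
      refine ⟨?_, i, j0, hAj0 i hi, ?_, rfl⟩
      · intro h
        exact hW0notmem (h ▸ Finset.mem_image_of_mem _ hi)
      · show w0 i ≠ w0 j0
        rw [hAmem i hi, hj0]
        exact fun h => hb0 h.symm
    rcases hx with rfl | ⟨i, hi, rfl⟩
    · rcases hy with rfl | ⟨i', hi', rfl⟩
      · exact absurd rfl hxy
      · exact adjW0g i' hi'
    · rcases hy with rfl | ⟨i', hi', rfl⟩
      · exact (adjW0g i hi).symm
      · have hii' : i ≠ i' := fun h => hxy (by rw [h])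
        apply adj_iff.mpr
        refine ⟨hxy, i, i', hii', ?_, ?_⟩
        · rw [hgi i hi, hgne i hi i' hi' hii']
          exact hb0
        · funext x
          rw [hgval, hgval]
          simp only [Function.comp_apply]
          by_cases h1 : x = i
          · rw [h1, Equiv.swap_apply_of_ne_of_ne hii' (hAj0 i hi), Equiv.swap_apply_left,
              Equiv.swap_apply_of_ne_of_ne (Ne.symm hii') (hAj0 i' hi'),
              hAmem i hi, hAmem i' hi']
          · by_cases h2 : x = i'
            · rw [h2, Equiv.swap_apply_left, Equiv.swap_apply_right, Equiv.swap_apply_left]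
            · by_cases h3 : x = j0
              · rw [h3, Equiv.swap_apply_right,
                  Equiv.swap_apply_of_ne_of_ne (show j0 ≠ i from fun h => hAj0 i hi h.symm)
                    (show j0 ≠ i' from fun h => hAj0 i' hi' h.symm),
                  Equiv.swap_apply_right, hAmem i' hi', hAmem i hi]
              · rw [Equiv.swap_apply_of_ne_of_ne h2 h3,
                  Equiv.swap_apply_of_ne_of_ne h1 h2,
                  Equiv.swap_apply_of_ne_of_ne h1 h3]
  · -- card
    rw [Finset.card_insert_of_notMem hW0notmem,
      Finset.card_image_of_injOn (fun i hi i' hi' h => hinjA i hi i' hi' h), hAcard, ha0]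
    omega

end Main

theorem stmt7 (n σ : ℕ) (hσ : 2 ≤ σ) (P : Fin σ → ℕ) (hP : ∀ i, 1 ≤ P i)
    (hn : ∑ i, P i = n) :
    (configGraph n σ P).cliqueNum = 1 + Finset.univ.sup P := by
  apply le_antisymm
  · obtain ⟨t, ht⟩ := (configGraph n σ P).exists_isNClique_cliqueNum
    rw [← ht.card_eq]
    exact clique_card_le hσ hP t ht.isClique
  · obtain ⟨S, hS⟩ := exists_big_clique hσ hP hn
    rw [← hS.card_eq]
    exact SimpleGraph.IsClique.card_le_cliqueNum (tc := hS.isClique)
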